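/- Let S₁ ⊊ S₂ ⊆ {1,…,d} with |S₂| ≤ n, suppose the submatrix X_{S₂} has full column rank, and suppose Σ_{S₂} is positive definite. Then df_R(S₁) < df_R(S₂). -/

import Mathlib

open Matrix Finset

set_option linter.unusedSectionVars false

section helpers

variable {α β ι : Type*} [Fintype α] [Fintype β] [Fintype ι] [DecidableEq α] [DecidableEq β]

noncomputable def ext0 (e : α → β) (z : α → ℝ) : β → ℝ :=
  fun b => if h : ∃ a, e a = b then z h.choose else 0

lemma ext0_apply {e : α → β} (he : Function.Injective e) (z : α → ℝ) (a : α) :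
    ext0 e z (e a) = z a := by
  have h : ∃ a', e a' = e a := ⟨a, rfl⟩
  rw [ext0, dif_pos h]
  congr 1
  exact he h.choose_spec

lemma ext0_sum_mul {e : α → β} (he : Function.Injective e) (z : α → ℝ) (f : β → ℝ) :
    ∑ b, ext0 e z b * f b = ∑ a, z a * f (e a) := by
  have h1 : ∑ a, z a * f (e a) = ∑ b ∈ Finset.univ.image e, ext0 e z b * f b := by
    rw [Finset.sum_image (fun a _ a' _ h => he h)]
    exact Finset.sum_congr rfl fun a _ => by rw [ext0_apply he]
  rw [h1]
  refine (Finset.sum_subset (Finset.subset_univ _) fun b _ hb => ?_).symm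
  have : ¬ ∃ a, e a = b := by
    rintro ⟨a, rfl⟩
    exact hb (Finset.mem_image_of_mem e (Finset.mem_univ a))
  rw [ext0, dif_neg this, zero_mul]

lemma ext0_dot_mulVec {e : α → β} (he : Function.Injective e) (A : Matrix β β ℝ)
    (z x : α → ℝ) :
    ext0 e z ⬝ᵥ (A *ᵥ ext0 e x) = z ⬝ᵥ ((A.submatrix e e) *ᵥ x) := by
  rw [dotProduct, ext0_sum_mul he]
  refine Finset.sum_congr rfl fun a _ => ?_
  congr 1
  rw [mulVec, dotProduct]
  calc ∑ b, A (e a) b * ext0 e x b = ∑ b, ext0 e x b * A (e a) b := by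
        simp [mul_comm]
    _ = ∑ a', x a' * A (e a) (e a') := ext0_sum_mul he x _
    _ = ∑ a', A (e a) (e a') * x a' := by simp [mul_comm]

lemma ext0_dot {e : α → β} (he : Function.Injective e) (z : α → ℝ) (w : β → ℝ) :
    ext0 e z ⬝ᵥ w = z ⬝ᵥ (w ∘ e) := ext0_sum_mul he z w

lemma posDef_submatrix {A : Matrix β β ℝ} (hA : A.PosDef) {e : α → β}
    (he : Function.Injective e) : (A.submatrix e e).PosDef := by
  refine .of_dotProduct_mulVec_pos (hA.1.submatrix e) fun x hx => ?_
  have hy : ext0 e x ≠ 0 := by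
    intro h
    apply hx
    funext a
    have := congrFun h (e a)
    rwa [ext0_apply he, Pi.zero_apply] at this
  have := hA.dotProduct_mulVec_pos hy
  rw [star_trivial] at this ⊢
  rwa [← ext0_dot_mulVec he]

/-- Key quadratic-form inequality. -/
lemma quad_key {A : Matrix β β ℝ} (hA : A.PosDef) {e : α → β}
    (he : Function.Injective e) (w : β → ℝ) :
    (w ∘ e) ⬝ᵥ ((A.submatrix e e)⁻¹ *ᵥ (w ∘ e)) ≤ w ⬝ᵥ (A⁻¹ *ᵥ w) := by
  set B := A.submatrix e e with hB
  have hBpd : B.PosDef := posDef_submatrix hA he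
  have hAdet : IsUnit A.det := hA.det_pos.ne'.isUnit
  have hBdet : IsUnit B.det := hBpd.det_pos.ne'.isUnit
  have hAsymm : Aᵀ = A := hA.1
  set z : α → ℝ := B⁻¹ *ᵥ (w ∘ e) with hz
  set y : β → ℝ := ext0 e z with hy
  set u : β → ℝ := A⁻¹ *ᵥ w with hu
  have hpsd := hA.posSemidef.dotProduct_mulVec_nonneg (y - u)
  rw [star_trivial] at hpsd
  have hAu : A *ᵥ u = w := by
    rw [hu, mulVec_mulVec, mul_nonsing_inv _ hAdet, one_mulVec]
  have hBz : B *ᵥ z = w ∘ e := by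
    rw [hz, mulVec_mulVec, mul_nonsing_inv _ hBdet, one_mulVec]
  have hyAy : y ⬝ᵥ (A *ᵥ y) = z ⬝ᵥ (w ∘ e) := by
    rw [hy, ext0_dot_mulVec he, ← hB, hBz]
  have hyAu : y ⬝ᵥ (A *ᵥ u) = z ⬝ᵥ (w ∘ e) := by
    rw [hAu, hy, ext0_dot he]
  have huA : u ᵥ* A = w := by
    rw [← hAsymm, vecMul_transpose, hAu]
  have huAy : u ⬝ᵥ (A *ᵥ y) = z ⬝ᵥ (w ∘ e) := by
    rw [dotProduct_mulVec, huA, dotProduct_comm, hy, ext0_dot he]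
  have huAu : u ⬝ᵥ (A *ᵥ u) = w ⬝ᵥ (A⁻¹ *ᵥ w) := by
    rw [hAu, dotProduct_comm]
  have hq1 : z ⬝ᵥ (w ∘ e) = (w ∘ e) ⬝ᵥ (B⁻¹ *ᵥ (w ∘ e)) := by
    rw [hz, dotProduct_comm]
  have hexp : (y - u) ⬝ᵥ (A *ᵥ (y - u)) =
      y ⬝ᵥ (A *ᵥ y) - y ⬝ᵥ (A *ᵥ u) - u ⬝ᵥ (A *ᵥ y) + u ⬝ᵥ (A *ᵥ u) := by
    rw [mulVec_sub, sub_dotProduct, dotProduct_sub, dotProduct_sub]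
    ring
  rw [hexp, hyAy, hyAu, huAy, huAu] at hpsd
  rw [← hq1]
  linarith

lemma trace_mul_gram (M : Matrix β β ℝ) (W : Matrix ι β ℝ) :
    (M * (Wᵀ * W)).trace = ∑ k : ι, (fun j => W k j) ⬝ᵥ (M *ᵥ fun j => W k j) := by
  rw [show M * (Wᵀ * W) = (M * Wᵀ) * W by rw [Matrix.mul_assoc], trace_mul_comm]
  rw [Matrix.trace]
  refine Finset.sum_congr rfl fun k _ => ?_
  simp only [diag_apply, Matrix.mul_apply, mulVec, dotProduct, transpose_apply,
    Finset.mul_sum]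

/-- Key trace inequality. -/
lemma trace_key {A S : Matrix β β ℝ} (hA : A.PosDef) (hS : S.PosSemidef)
    {e : α → β} (he : Function.Injective e) :
    ((A.submatrix e e)⁻¹ * S.submatrix e e).trace ≤ (A⁻¹ * S).trace := by
  obtain ⟨C, hCt, hCC⟩ : ∃ C : Matrix β β ℝ, Cᵀ = C ∧ Cᵀ * C = S := by
    open scoped MatrixOrder in
    refine ⟨CFC.sqrt S, ?_, ?_⟩
    · rw [← conjTranspose_eq_transpose_of_trivial]
      exact (CFC.sqrt_nonneg S).posSemidef.1
    · have h1 : (CFC.sqrt S)ᵀ = CFC.sqrt S := by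
        rw [← conjTranspose_eq_transpose_of_trivial]
        exact (CFC.sqrt_nonneg S).posSemidef.1
      rw [h1]
      exact CFC.sqrt_mul_sqrt_self S hS.nonneg
  have hsub : S.submatrix e e = (C.submatrix id e)ᵀ * (C.submatrix id e) := by
    rw [← hCC, submatrix_mul _ _ _ id _ Function.bijective_id, transpose_submatrix]
  rw [hsub, trace_mul_gram, ← hCC, trace_mul_gram]
  refine Finset.sum_le_sum fun k _ => ?_
  have h := quad_key hA he (fun b => C k b)
  exact h

end helpers
open Matrix

variable {n d : ℕ}

/-- The submatrix of `X` consisting of the columns indexed by `S`. -/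
noncomputable def colSub (X : Matrix (Fin n) (Fin d) ℝ) (S : Finset (Fin d)) :
    Matrix (Fin n) {j // j ∈ S} ℝ :=
  Matrix.of fun i j => X i j.val

/-- The principal submatrix of `A` on the index set `S`. -/
noncomputable def prinSub (A : Matrix (Fin d) (Fin d) ℝ) (S : Finset (Fin d)) :
    Matrix {j // j ∈ S} {j // j ∈ S} ℝ :=
  Matrix.of fun i j => A i.val j.val

/-- The predictive model degrees of freedom of the ordinary least squares model on the
variable subset `S`: `df_R(S) = |S|/2 + (n/2)·tr((X_Sᵀ X_S)⁻¹ Σ_S)`. -/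
noncomputable def dfR (X : Matrix (Fin n) (Fin d) ℝ) (Sig : Matrix (Fin d) (Fin d) ℝ)
    (S : Finset (Fin d)) : ℝ :=
  (S.card : ℝ) / 2 +
    ((n : ℝ) / 2) * (((colSub X S)ᵀ * colSub X S)⁻¹ * prinSub Sig S).trace

/-- For nested subsets `S₁ ⊊ S₂` with `|S₂| ≤ n`, full column rank
`X_{S₂}` and positive definite `Σ_{S₂}`, the predictive model degrees of freedom is
strictly increasing: `df_R(S₁) < df_R(S₂)`. -/
theorem dfR_strictMono_of_ssubset
    (X : Matrix (Fin n) (Fin d) ℝ) (Sig : Matrix (Fin d) (Fin d) ℝ)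
    (hSig : Sig.PosSemidef)
    (S₁ S₂ : Finset (Fin d)) (hsub : S₁ ⊂ S₂) (hcard : S₂.card ≤ n)
    (hrank : (colSub X S₂).rank = S₂.card)
    (hpd : (prinSub Sig S₂).PosDef) :
    dfR X Sig S₁ < dfR X Sig S₂ := by
  classical
  set e : {j // j ∈ S₁} → {j // j ∈ S₂} := fun a => ⟨a.1, hsub.subset a.2⟩ with he_def
  have he : Function.Injective e := by
    intro a a' h
    exact Subtype.ext (by simpa [he_def] using congrArg Subtype.val h)
  -- X₂ has trivial kernel
  have hker : LinearMap.ker (colSub X S₂).mulVecLin = ⊥ := by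
    have h1 := LinearMap.finrank_range_add_finrank_ker (colSub X S₂).mulVecLin
    have h2 : Module.finrank ℝ ({j // j ∈ S₂} → ℝ) = S₂.card := by
      rw [Module.finrank_pi, Fintype.card_coe]
    rw [h2] at h1
    have h3 : Module.finrank ℝ (LinearMap.range (colSub X S₂).mulVecLin) = S₂.card := hrank
    rw [h3] at h1
    have h4 : Module.finrank ℝ (LinearMap.ker (colSub X S₂).mulVecLin) = 0 := by omega
    exact Submodule.finrank_eq_zero.mp h4
  have hinj : Function.Injective (colSub X S₂).mulVecLin := LinearMap.ker_eq_bot.mp hker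
  -- A is positive definite
  have hA : ((colSub X S₂)ᵀ * colSub X S₂).PosDef := by
    refine .of_dotProduct_mulVec_pos ?_ fun x hx => ?_
    · rw [← conjTranspose_eq_transpose_of_trivial]
      exact isHermitian_conjTranspose_mul_self (colSub X S₂)
    · have hXx : colSub X S₂ *ᵥ x ≠ 0 := by
        intro h
        apply hx
        have : (colSub X S₂).mulVecLin x = (colSub X S₂).mulVecLin 0 := by
          simpa [Matrix.mulVecLin_apply] using h
        exact hinj this
      rw [star_trivial, ← mulVec_mulVec, dotProduct_mulVec, vecMul_transpose]
      have h0 : 0 ≤ (colSub X S₂ *ᵥ x) ⬝ᵥ (colSub X S₂ *ᵥ x) := by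
        rw [dotProduct]
        exact Finset.sum_nonneg fun i _ => mul_self_nonneg _
      exact lt_of_le_of_ne h0 (Ne.symm (mt dotProduct_self_eq_zero.mp hXx))
  -- identify the S₁-matrices as submatrices
  have hBid : (colSub X S₁)ᵀ * colSub X S₁ =
      ((colSub X S₂)ᵀ * colSub X S₂).submatrix e e := by
    ext a a'
    simp [colSub, Matrix.mul_apply, he_def]
  have hSid : prinSub Sig S₁ = (prinSub Sig S₂).submatrix e e := by
    ext a a'
    simp [prinSub, he_def]
  -- trace inequality
  have htr : (((colSub X S₁)ᵀ * colSub X S₁)⁻¹ * prinSub Sig S₁).trace ≤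
      (((colSub X S₂)ᵀ * colSub X S₂)⁻¹ * prinSub Sig S₂).trace := by
    rw [hBid, hSid]
    exact trace_key hA hpd.posSemidef he
  have hcardlt : (S₁.card : ℝ) < S₂.card := by
    exact_mod_cast Finset.card_lt_card hsub
  have hn2 : (0:ℝ) ≤ (n : ℝ) / 2 := by positivity
  rw [dfR, dfR]
  have hmul := mul_le_mul_of_nonneg_left htr hn2
  have h5 : (S₁.card : ℝ) / 2 < (S₂.card : ℝ) / 2 := by linarith
  exact add_lt_add_of_lt_of_le h5 hmul
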